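/- arXiv:1412.7965 — 3 statements merged into one kernel-verified Lean document; each statement's English description precedes it below -/
import Mathlib

section
/- Every context C over a set of context dimensions, taken together with the domain theory Φ, is propositionally satisfiable: the valuation that makes true exactly the assignments (d = v) where v is an ancestor (under the reflexive-transitive closure of the predecessor relation) of the value assigned to d in C satisfies both C and Φ. -/
/-- Propositional context expressions over dimension-value atoms `(d = v)`. -/
inductive CtxExpr (D V : Type) where
  | atom : D → V → CtxExpr D V
  | and  : CtxExpr D V → CtxExpr D V → CtxExpr D V
  | or   : CtxExpr D V → CtxExpr D V → CtxExpr D V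
  | not  : CtxExpr D V → CtxExpr D V

/-- Evaluation of a context expression under a propositional valuation
    `w : D → V → Prop` of the atoms. -/
def CtxExpr.eval {D V : Type} (w : D → V → Prop) : CtxExpr D V → Prop
  | .atom d v => w d v
  | .and a b  => a.eval w ∧ b.eval w
  | .or a b   => a.eval w ∨ b.eval w
  | .not a    => ¬ a.eval w

/-- `pred d v1 v2` means `v1 ≺_d v2`, i.e. `v2` is the parent of `v1` in the
    tree-shaped value domain of dimension `d`.  A valuation satisfies the
    domain theory `Φ` iff it satisfies all upward-closure implications and all
    sibling-disjointness axioms. -/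
def satPhi {D V : Type} (pred : D → V → V → Prop) (w : D → V → Prop) : Prop :=
  (∀ d v1 v2, pred d v1 v2 → w d v1 → w d v2) ∧
  (∀ d v1 v2 p, pred d v1 p → pred d v2 p → v1 ≠ v2 → ¬ (w d v1 ∧ w d v2))

/-- A valuation satisfies a context `C` (one value per dimension) iff it makes
    every atom `(d = C d)` true. -/
def satCtx {D V : Type} (C : D → V) (w : D → V → Prop) : Prop :=
  ∀ d, w d (C d)

/-- `C ∪ Φ ⊨ φ` : classical propositional entailment. -/
def entails {D V : Type} (pred : D → V → V → Prop) (C : D → V)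
    (φ : CtxExpr D V) : Prop :=
  ∀ w : D → V → Prop, satPhi pred w → satCtx C w → φ.eval w

/-- `ancestor pred d x y` : `y` is an ancestor of `x` (including `x` itself),
    i.e. the reflexive-transitive closure of the predecessor relation. -/
def ancestor {D V : Type} (pred : D → V → V → Prop) (d : D) (x y : V) : Prop :=
  Relation.ReflTransGen (pred d) x y

/-- Tree-shapedness of each value domain: the parent is unique and the
    predecessor relation is acyclic. -/
def treeShaped {D V : Type} (pred : D → V → V → Prop) : Prop :=
  (∀ d v p p', pred d v p → pred d v p' → p = p') ∧
  (∀ d v, ¬ Relation.TransGen (pred d) v v)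


private lemma rtg_comparable {V : Type} {r : V → V → Prop}
    (huniq : ∀ v p p', r v p → r v p' → p = p')
    {a b c : V} (hab : Relation.ReflTransGen r a b)
    (hac : Relation.ReflTransGen r a c) :
    Relation.ReflTransGen r b c ∨ Relation.ReflTransGen r c b := by
  induction hab using Relation.ReflTransGen.head_induction_on with
  | refl => exact Or.inl hac
  | head h _ ih =>
    rename_i a a' hab'
    rcases hac.cases_head with rfl | ⟨c', hc', hc'c⟩
    · exact Or.inr (Relation.ReflTransGen.head h hab')
    · exact ih (huniq _ _ _ hc' h ▸ hc'c)

/-- every context together with `Φ` is satisfiable, witnessed by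
    the valuation making true exactly the ancestors of the assigned values. -/
theorem context_theory_satisfiable {D V : Type}
    (pred : D → V → V → Prop) (htree : treeShaped pred)
    (C : D → V) :
    satPhi pred (fun d v => ancestor pred d (C d) v) ∧
      satCtx C (fun d v => ancestor pred d (C d) v) := by
  obtain ⟨huniq, hacyc⟩ := htree
  refine ⟨⟨?_, ?_⟩, fun d => Relation.ReflTransGen.refl⟩
  · intro d v1 v2 h h1
    exact h1.tail h
  · rintro d v1 v2 p h1 h2 hne ⟨ha1, ha2⟩
    rcases rtg_comparable (huniq d) ha1 ha2 with h | h
    · rcases h.cases_head with rfl | ⟨q, hq, hq2⟩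
      · exact hne rfl
      · exact hacyc d p (Relation.TransGen.tail' (huniq d _ _ _ hq h1 ▸ hq2) h2)
    · rcases h.cases_head with rfl | ⟨q, hq, hq1⟩
      · exact hne rfl
      · exact hacyc d p (Relation.TransGen.tail' (huniq d _ _ _ hq h2 ▸ hq1) h1)
end

section
/- For every context C, the context obtained by replacing the value of each dimension d with the root value ⊤_d of its tree yields (with Φ) the smallest contextualized TBox among all contexts: T_Γ^{C_⊤} ⊆ T_Γ^C for every context C, provided every guard φ in T_Γ is a positive Boolean combination (built from ∧ and ∨ only) of atoms. -/
/-- The TBox of a contextualized TBox `TG` in context `C`: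
    `T_Γ^C = { t | ⟨t : φ⟩ ∈ T_Γ and C ∪ Φ ⊨ φ }`. -/
def tboxIn {D V T : Type} (pred : D → V → V → Prop)
    (TG : Set (T × CtxExpr D V)) (C : D → V) : Set T :=
  {t | ∃ φ, (t, φ) ∈ TG ∧ entails pred C φ}

/-- Positive context expressions: built from atoms using only `∧` and `∨`. -/
def CtxExpr.positive {D V : Type} : CtxExpr D V → Prop
  | .atom _ _ => True
  | .and a b  => a.positive ∧ b.positive
  | .or a b   => a.positive ∧ b.positive
  | .not _    => False

/-- if all guards in `T_Γ` are positive, the context assigning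
    each dimension its root value yields the smallest TBox:
    `T_Γ^{C_⊤} ⊆ T_Γ^C` for every context `C`. -/
theorem tboxIn_root_smallest {D V T : Type}
    (pred : D → V → V → Prop) (htree : treeShaped pred)
    (root : D → V)
    (hroot : ∀ d v, ancestor pred d v (root d))
    (TG : Set (T × CtxExpr D V)) (hfin : TG.Finite)
    (hpos : ∀ t φ, (t, φ) ∈ TG → CtxExpr.positive φ) :
    ∀ C : D → V, tboxIn pred TG root ⊆ tboxIn pred TG C := by
  intro C t ht
  obtain ⟨φ, hmem, hent⟩ := ht
  refine ⟨φ, hmem, ?_⟩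
  intro w hΦ hC
  apply hent w hΦ
  intro d
  have key : ∀ x y, Relation.ReflTransGen (pred d) x y → w d x → w d y := by
    intro x y h hx
    induction h with
    | refl => exact hx
    | tail _ hstep ih => exact hΦ.1 d _ _ hstep ih
  exact key _ _ (hroot d (C d)) (hC d)
end

section
/- If two transition systems are related by a bisimulation that additionally preserves the atomic state predicates, then their initial states satisfy exactly the same closed propositional μ-calculus formulas. -/
/-- μ-calculus formulas over atomic propositions `AP` and variables `Var`. -/
inductive MuF (AP Var : Type) where
  | atom : AP → MuF AP Var
  | var  : Var → MuF AP Var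
  | not  : MuF AP Var → MuF AP Var
  | and  : MuF AP Var → MuF AP Var → MuF AP Var
  | dia  : MuF AP Var → MuF AP Var
  | mu   : Var → MuF AP Var → MuF AP Var

/-- Extension function over a labelled transition system `(S, tr, L)`. -/
def MuF.ext {AP Var S : Type} [DecidableEq Var]
    (tr : S → S → Prop) (L : S → Set AP) :
    MuF AP Var → (Var → Set S) → Set S
  | .atom a, _ => {s | a ∈ L s}
  | .var Z, V => V Z
  | .not φ, V => (φ.ext tr L V)ᶜ
  | .and a b, V => a.ext tr L V ∩ b.ext tr L V
  | .dia φ, V => {s | ∃ s', tr s s' ∧ s' ∈ φ.ext tr L V}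
  | .mu Z φ, V => ⋂₀ {E : Set S | φ.ext tr L (Function.update V Z E) ⊆ E}

/-- Polarity tracking: every free occurrence of `Z` has parity `b`. -/
def MuF.pol {AP Var : Type} (Z : Var) : MuF AP Var → Bool → Prop
  | .atom _, _ => True
  | .var W, b => W = Z → b = true
  | .not φ, b => φ.pol Z (!b)
  | .and a c, b => a.pol Z b ∧ c.pol Z b
  | .dia φ, b => φ.pol Z b
  | .mu W φ, b => W = Z ∨ φ.pol Z b

/-- `Z` occurs free in `φ`. -/
def MuF.freeIn {AP Var : Type} (Z : Var) : MuF AP Var → Prop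
  | .atom _ => False
  | .var W => W = Z
  | .not φ => φ.freeIn Z
  | .and a b => a.freeIn Z ∨ b.freeIn Z
  | .dia φ => φ.freeIn Z
  | .mu W φ => W ≠ Z ∧ φ.freeIn Z

/-- Well-formedness: every bound variable occurs only positively in its
    fixpoint body. -/
def MuF.wf {AP Var : Type} : MuF AP Var → Prop
  | .atom _ => True
  | .var _ => True
  | .not φ => φ.wf
  | .and a b => a.wf ∧ b.wf
  | .dia φ => φ.wf
  | .mu Z φ => φ.pol Z true ∧ φ.wf

/-- Bisimulation between two labelled transition systems, preserving labels. -/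
def Bisimulation {AP S1 S2 : Type}
    (tr1 : S1 → S1 → Prop) (L1 : S1 → Set AP)
    (tr2 : S2 → S2 → Prop) (L2 : S2 → Set AP)
    (B : S1 → S2 → Prop) : Prop :=
  (∀ s t, B s t → L1 s = L2 t) ∧
  (∀ s t s', B s t → tr1 s s' → ∃ t', tr2 t t' ∧ B s' t') ∧
  (∀ s t t', B s t → tr2 t t' → ∃ s', tr1 s s' ∧ B s' t')

lemma Bisimulation.swap {AP S1 S2 : Type}
    {tr1 : S1 → S1 → Prop} {L1 : S1 → Set AP}
    {tr2 : S2 → S2 → Prop} {L2 : S2 → Set AP} {B : S1 → S2 → Prop}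
    (h : Bisimulation tr1 L1 tr2 L2 B) :
    Bisimulation tr2 L2 tr1 L1 (fun t s => B s t) := by
  obtain ⟨hl, hf, hb⟩ := h
  exact ⟨fun t s hst => (hl s t hst).symm,
    fun t s t' hst ht => hb s t t' hst ht,
    fun t s s' hst hs => hf s t s' hst hs⟩

lemma MuF.key {AP Var : Type} [DecidableEq Var] (φ : MuF AP Var) :
    ∀ {S1 S2 : Type} (tr1 : S1 → S1 → Prop) (L1 : S1 → Set AP)
      (tr2 : S2 → S2 → Prop) (L2 : S2 → Set AP) (B : S1 → S2 → Prop),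
      Bisimulation tr1 L1 tr2 L2 B → φ.wf →
      ∀ (V1 : Var → Set S1) (V2 : Var → Set S2),
        (∀ Z, φ.freeIn Z →
          ((φ.pol Z true ∧ ∀ s t, B s t → s ∈ V1 Z → t ∈ V2 Z) ∨
           (φ.pol Z false ∧ ∀ s t, B s t → t ∈ V2 Z → s ∈ V1 Z) ∨
           ((∀ s t, B s t → s ∈ V1 Z → t ∈ V2 Z) ∧
            (∀ s t, B s t → t ∈ V2 Z → s ∈ V1 Z)))) →
        ∀ s t, B s t → s ∈ φ.ext tr1 L1 V1 → t ∈ φ.ext tr2 L2 V2 := by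
  induction φ with
  | atom a =>
    intro S1 S2 tr1 L1 tr2 L2 B hB hwf V1 V2 hV s t hst hs
    simp only [MuF.ext, Set.mem_setOf_eq] at *
    rw [← hB.1 s t hst]; exact hs
  | var W =>
    intro S1 S2 tr1 L1 tr2 L2 B hB hwf V1 V2 hV s t hst hs
    simp only [MuF.ext] at *
    rcases hV W (by simp [MuF.freeIn]) with ⟨_, h⟩ | ⟨hpol, _⟩ | ⟨h, _⟩
    · exact h s t hst hs
    · exact absurd (hpol rfl) (by simp)
    · exact h s t hst hs
  | not ψ ih =>
    intro S1 S2 tr1 L1 tr2 L2 B hB hwf V1 V2 hV s t hst hs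
    simp only [MuF.ext, Set.mem_compl_iff] at *
    intro ht
    exact hs (ih tr2 L2 tr1 L1 (fun t s => B s t) hB.swap hwf V2 V1
      (by
        intro Z hZ
        rcases hV Z hZ with ⟨hpol, h⟩ | ⟨hpol, h⟩ | ⟨h1, h2⟩
        · exact Or.inr (Or.inl ⟨hpol, fun t s hst => h s t hst⟩)
        · exact Or.inl ⟨hpol, fun t s hst => h s t hst⟩
        · exact Or.inr (Or.inr ⟨fun t s hst => h2 s t hst, fun t s hst => h1 s t hst⟩))
      t s hst ht)
  | and a c iha ihc =>
    intro S1 S2 tr1 L1 tr2 L2 B hB hwf V1 V2 hV s t hst hs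
    simp only [MuF.ext, Set.mem_inter_iff] at *
    constructor
    · refine iha tr1 L1 tr2 L2 B hB hwf.1 V1 V2 ?_ s t hst hs.1
      intro Z hZ
      rcases hV Z (Or.inl hZ) with ⟨hpol, h⟩ | ⟨hpol, h⟩ | h3
      · exact Or.inl ⟨hpol.1, h⟩
      · exact Or.inr (Or.inl ⟨hpol.1, h⟩)
      · exact Or.inr (Or.inr h3)
    · refine ihc tr1 L1 tr2 L2 B hB hwf.2 V1 V2 ?_ s t hst hs.2
      intro Z hZ
      rcases hV Z (Or.inr hZ) with ⟨hpol, h⟩ | ⟨hpol, h⟩ | h3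
      · exact Or.inl ⟨hpol.2, h⟩
      · exact Or.inr (Or.inl ⟨hpol.2, h⟩)
      · exact Or.inr (Or.inr h3)
  | dia ψ ih =>
    intro S1 S2 tr1 L1 tr2 L2 B hB hwf V1 V2 hV s t hst hs
    simp only [MuF.ext, Set.mem_setOf_eq] at *
    obtain ⟨s', hss', hs'⟩ := hs
    obtain ⟨t', htt', hst'⟩ := hB.2.1 s t s' hst hss'
    exact ⟨t', htt', ih tr1 L1 tr2 L2 B hB hwf V1 V2 hV s' t' hst' hs'⟩
  | mu W ψ ih =>
    intro S1 S2 tr1 L1 tr2 L2 B hB hwf V1 V2 hV s t hst hs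
    simp only [MuF.ext, Set.mem_sInter, Set.mem_setOf_eq] at *
    intro E2 hE2
    set E1 : Set S1 := {u | ∀ v, B u v → v ∈ E2} with hE1def
    have hE1 : ψ.ext tr1 L1 (Function.update V1 W E1) ⊆ E1 := by
      intro s' hs' t' hst'
      apply hE2
      refine ih tr1 L1 tr2 L2 B hB hwf.2
        (Function.update V1 W E1) (Function.update V2 W E2) ?_ s' t' hst' hs'
      intro Z hZ
      by_cases hZW : Z = W
      · subst hZW
        refine Or.inl ⟨hwf.1, ?_⟩
        intro u v huv hu
        simp only [Function.update_self] at *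
        exact hu v huv
      · have hupd1 : Function.update V1 W E1 Z = V1 Z := Function.update_of_ne hZW _ _
        have hupd2 : Function.update V2 W E2 Z = V2 Z := Function.update_of_ne hZW _ _
        rw [hupd1, hupd2]
        have hfree : (MuF.mu W ψ).freeIn Z := ⟨fun h => hZW h.symm, hZ⟩
        rcases hV Z hfree with ⟨hpol, h⟩ | ⟨hpol, h⟩ | h3
        · exact Or.inl ⟨hpol.resolve_left (fun h => hZW h.symm), h⟩
        · exact Or.inr (Or.inl ⟨hpol.resolve_left (fun h => hZW h.symm), h⟩)
        · exact Or.inr (Or.inr h3)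
    exact hs E1 hE1 t hst

/-- bisimilar initial states satisfy exactly the same closed
    (well-formed) μ-calculus formulas. -/
theorem bisimulation_preserves_mu_calculus {AP Var S1 S2 : Type}
    [DecidableEq Var]
    (tr1 : S1 → S1 → Prop) (L1 : S1 → Set AP) (s01 : S1)
    (tr2 : S2 → S2 → Prop) (L2 : S2 → Set AP) (s02 : S2)
    (B : S1 → S2 → Prop)
    (hB : Bisimulation tr1 L1 tr2 L2 B) (h0 : B s01 s02)
    (φ : MuF AP Var)
    (hclosed : ∀ Z : Var, ¬ φ.freeIn Z) (hwf : φ.wf) :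
    ∀ (V1 : Var → Set S1) (V2 : Var → Set S2),
      (s01 ∈ φ.ext tr1 L1 V1 ↔ s02 ∈ φ.ext tr2 L2 V2) := by
  intro V1 V2
  constructor
  · intro h
    exact MuF.key φ tr1 L1 tr2 L2 B hB hwf V1 V2
      (fun Z hZ => absurd hZ (hclosed Z)) s01 s02 h0 h
  · intro h
    exact MuF.key φ tr2 L2 tr1 L1 (fun t s => B s t) hB.swap hwf V2 V1
      (fun Z hZ => absurd hZ (hclosed Z)) s02 s01 h0 h
end
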